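/- One-step probability-drop identity for the modified cross-entropy update: let A be a finite type with |A| ≥ 2, a* ∈ A, u ≥ 0, and let θ' be the MCE update of θ : A → ℝ with step u at a*. Then for every a ≠ a*, softmax θ (a) − softmax θ' (a) = softmax θ (a) · softmax θ' (a*) · (1 − exp(−u·|A|/(|A|−1))). -/

import Mathlib

noncomputable def softmax {A : Type*} [Fintype A] (θ : A → ℝ) (a : A) : ℝ :=
  Real.exp (θ a) / ∑ b, Real.exp (θ b)

/-- One-step probability-drop identity for the modified cross-entropy update. -/
theorem mce_probability_drop_identity {A : Type*} [Fintype A] [DecidableEq A]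
    (hA : 2 ≤ Fintype.card A) (astar : A) (u : ℝ) (hu : 0 ≤ u)
    (θ θ' : A → ℝ)
    (hstar : θ' astar = θ astar + u)
    (hother : ∀ a, a ≠ astar → θ' a = θ a - u / ((Fintype.card A : ℝ) - 1)) :
    ∀ a, a ≠ astar →
      softmax θ a - softmax θ' a =
        softmax θ a * softmax θ' astar *
          (1 - Real.exp (-(u * (Fintype.card A : ℝ) / ((Fintype.card A : ℝ) - 1)))) := by
  intro a ha
  set n : ℝ := (Fintype.card A : ℝ) with hn
  have hn2 : (2:ℝ) ≤ n := by rw [hn]; exact_mod_cast hA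
  have hn1 : n - 1 ≠ 0 := by linarith
  set c : ℝ := u / (n - 1) with hc
  set S : ℝ := ∑ b, Real.exp (θ b) with hSdef
  set S' : ℝ := ∑ b, Real.exp (θ' b) with hS'def
  have hS : 0 < S := Finset.sum_pos (fun b _ => Real.exp_pos _) ⟨astar, Finset.mem_univ _⟩
  have hS' : 0 < S' := Finset.sum_pos (fun b _ => Real.exp_pos _) ⟨astar, Finset.mem_univ _⟩
  have hsplit : ∀ (f : A → ℝ), ∑ b, f b = f astar + ∑ b ∈ Finset.univ.erase astar, f b :=
    fun f => (Finset.add_sum_erase _ f (Finset.mem_univ astar)).symm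
  have hsum : S' = Real.exp (θ astar) * Real.exp u
      + Real.exp (-c) * (S - Real.exp (θ astar)) := by
    rw [hS'def, hsplit (fun b => Real.exp (θ' b)), hstar, Real.exp_add]
    have : ∑ b ∈ Finset.univ.erase astar, Real.exp (θ' b)
        = Real.exp (-c) * ∑ b ∈ Finset.univ.erase astar, Real.exp (θ b) := by
      rw [Finset.mul_sum]
      refine Finset.sum_congr rfl fun b hb => ?_
      rw [hother b (Finset.ne_of_mem_erase hb), sub_eq_add_neg, Real.exp_add, mul_comm]
    rw [this, hSdef, hsplit (fun b => Real.exp (θ b))]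
    ring
  have hexp : Real.exp (-(u * n / (n - 1))) = Real.exp (-u) * Real.exp (-c) := by
    rw [← Real.exp_add]
    congr 1
    rw [hc]
    field_simp
    ring
  have hθ'a : θ' a = θ a - c := hother a ha
  simp only [softmax, ← hSdef, ← hS'def, ← hn, hθ'a, hstar, hexp,
    sub_eq_add_neg (θ a) c, Real.exp_add]
  have heu : Real.exp (-u) * Real.exp u = 1 := by rw [← Real.exp_add]; simp
  field_simp
  linear_combination hsum + Real.exp (θ astar) * Real.exp (-c) * heu
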